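/- arXiv:1309.6557 — 3 statements merged into one kernel-verified Lean document; each statement's English description precedes it below -/
import Mathlib

section
/- For a prime p ≥ 3 and an invertible symmetric n×n matrix S over Z_p, for any vector m ∈ Z_p^n, the absolute value of ∑_{l ∈ Z_p^n} ω^(lᵀ S l + mᵀ l) equals √(p^n), where ω = e^(2πi/p). -/
open Matrix Finset

theorem weil_sum_abs_odd (p n : ℕ) [hp : Fact p.Prime] (hp3 : 3 ≤ p)
    (S : Matrix (Fin n) (Fin n) (ZMod p)) (hS : S.IsSymm) (hdet : S.det ≠ 0)
    (m : Fin n → ZMod p) :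
    ‖∑ l : Fin n → ZMod p,
        Complex.exp (2 * Real.pi * Complex.I / p) ^
          (dotProduct l (S.mulVec l) + dotProduct m l).val‖
      = Real.sqrt (p ^ n) := by
  classical
  haveI : NeZero p := ⟨hp.out.pos.ne'⟩
  set ζ : ℂ := Complex.exp (2 * Real.pi * Complex.I / p) with hζdef
  have hpc : (p : ℂ) ≠ 0 := Nat.cast_ne_zero.mpr hp.out.pos.ne'
  have hprim : IsPrimitiveRoot ζ p := Complex.isPrimitiveRoot_exp p hp.out.pos.ne'
  have hζp : ζ ^ p = 1 := hprim.pow_eq_one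
  set ψ : AddChar (ZMod p) ℂ := AddChar.zmodChar p hζp with hψdef
  have hψ_apply : ∀ x : ZMod p, ψ x = ζ ^ x.val := fun x => rfl
  have hψprim : AddChar.IsPrimitive ψ :=
    AddChar.zmodChar_primitive_of_primitive_root p hprim
  -- conjugation
  have habsζ : ‖ζ‖ = 1 := by
    rw [hζdef, show (2 * (Real.pi : ℂ) * Complex.I / p) =
      ((2 * Real.pi / p : ℝ) : ℂ) * Complex.I by push_cast; ring]
    exact Complex.norm_exp_ofReal_mul_I _
  have hconj : ∀ x : ZMod p, (starRingEnd ℂ) (ψ x) = ψ (-x) := by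
    intro x
    have h1 : ‖ψ x‖ = 1 := by
      rw [hψ_apply, norm_pow, habsζ, one_pow]
    rw [← Complex.inv_eq_conj h1]
    have : ψ (-x) * ψ x = 1 := by
      rw [← AddChar.map_add_eq_mul, neg_add_cancel, AddChar.map_zero_eq_one]
    exact (eq_inv_of_mul_eq_one_left this).symm
  -- the key character sum over the product group
  have key : ∀ v : Fin n → ZMod p,
      ∑ b : Fin n → ZMod p, ψ (b ⬝ᵥ v) = if v = 0 then ((p : ℂ) ^ n) else 0 := by
    intro v
    split_ifs with hv
    · subst hv
      simp only [dotProduct_zero, AddChar.map_zero_eq_one, Finset.sum_const,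
        Finset.card_univ, nsmul_eq_mul, mul_one]
      simp [Fintype.card_fun, ZMod.card]
    · obtain ⟨j, hj⟩ := Function.ne_iff.mp hv
      have hms : AddChar.mulShift ψ (v j) ≠ 1 := hψprim hj
      obtain ⟨x, hx⟩ := AddChar.ne_one_iff.mp hms
      rw [AddChar.mulShift_apply] at hx
      set b₀ : Fin n → ZMod p := Pi.single j x with hb₀def
      have hb₀ : ψ (b₀ ⬝ᵥ v) ≠ 1 := by
        rw [hb₀def, single_dotProduct, mul_comm]
        exact hx
      have hshift : ψ (b₀ ⬝ᵥ v) * ∑ b : Fin n → ZMod p, ψ (b ⬝ᵥ v)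
          = ∑ b : Fin n → ZMod p, ψ (b ⬝ᵥ v) := by
        rw [Finset.mul_sum]
        exact Fintype.sum_equiv (Equiv.addLeft b₀) _ _ fun y => by
          rw [Equiv.coe_addLeft, add_dotProduct, AddChar.map_add_eq_mul]
      exact eq_zero_of_mul_eq_self_left hb₀ hshift
  -- notation for the quadratic form
  set Q : (Fin n → ZMod p) → ZMod p :=
    fun l => l ⬝ᵥ S.mulVec l + m ⬝ᵥ l with hQdef
  -- symmetry
  have hsym : ∀ b d : Fin n → ZMod p, d ⬝ᵥ S.mulVec b = b ⬝ᵥ S.mulVec d := by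
    intro b d
    calc d ⬝ᵥ S.mulVec b = (Matrix.vecMul d S) ⬝ᵥ b := Matrix.dotProduct_mulVec _ _ _
      _ = (S.mulVec d) ⬝ᵥ b := by rw [← Matrix.vecMul_transpose, hS]
      _ = b ⬝ᵥ S.mulVec d := dotProduct_comm _ _
  have hQ : ∀ b d : Fin n → ZMod p,
      Q (b + d) - Q b = Q d + b ⬝ᵥ S.mulVec ((2 : ZMod p) • d) := by
    intro b d
    simp only [hQdef, Matrix.mulVec_add, dotProduct_add, add_dotProduct,
      Matrix.mulVec_smul, dotProduct_smul, hsym b d, smul_eq_mul]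
    ring
  -- injectivity facts
  have h2ne : (2 : ZMod p) ≠ 0 := by
    have : ((2 : ℕ) : ZMod p) ≠ 0 := by
      rw [Ne, ZMod.natCast_eq_zero_iff]
      intro h
      have := Nat.le_of_dvd (by norm_num) h
      omega
    exact_mod_cast this
  have hinj : Function.Injective S.mulVec :=
    Matrix.mulVec_injective_iff_isUnit.mpr ((Matrix.isUnit_iff_isUnit_det S).mpr (isUnit_iff_ne_zero.mpr hdet))
  have h3 : ∀ d : Fin n → ZMod p, S.mulVec ((2 : ZMod p) • d) = 0 ↔ d = 0 := by
    intro d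
    constructor
    · intro h
      have h' : (2 : ZMod p) • d = 0 := by
        apply hinj
        rw [h, Matrix.mulVec_zero]
      rcases smul_eq_zero.mp h' with h2 | hd
      · exact absurd h2 h2ne
      · exact hd
    · intro h; rw [h, smul_zero, Matrix.mulVec_zero]
  -- the main computation
  set z : ℂ := ∑ l : Fin n → ZMod p, ψ (Q l) with hzdef
  have hzz : z * (starRingEnd ℂ) z = (p : ℂ) ^ n := by
    rw [hzdef, map_sum]
    simp_rw [hconj]
    rw [Finset.sum_mul_sum]
    have h1 : ∀ a b : Fin n → ZMod p, ψ (Q a) * ψ (-(Q b)) = ψ (Q a - Q b) := by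
      intro a b
      rw [← AddChar.map_add_eq_mul, ← sub_eq_add_neg]
    simp_rw [h1]
    rw [Finset.sum_comm]
    have h2 : ∀ b : Fin n → ZMod p, ∑ a : Fin n → ZMod p, ψ (Q a - Q b)
        = ∑ d : Fin n → ZMod p, ψ (Q d) * ψ (b ⬝ᵥ S.mulVec ((2 : ZMod p) • d)) := by
      intro b
      rw [← Equiv.sum_comp (Equiv.addLeft b)]
      refine Finset.sum_congr rfl fun d _ => ?_
      rw [Equiv.coe_addLeft, hQ b d, AddChar.map_add_eq_mul]
    simp_rw [h2]
    rw [Finset.sum_comm]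
    have h4 : ∀ d : Fin n → ZMod p,
        ∑ b : Fin n → ZMod p, ψ (Q d) * ψ (b ⬝ᵥ S.mulVec ((2 : ZMod p) • d))
        = ψ (Q d) * (if d = 0 then ((p : ℂ) ^ n) else 0) := by
      intro d
      rw [← Finset.mul_sum, key]
      congr 1
      simp only [h3 d]
    simp_rw [h4]
    rw [Finset.sum_eq_single 0]
    · have hQ0 : Q 0 = 0 := by simp [hQdef]
      simp [hQ0]
    · intro b _ hb
      simp [hb]
    · intro h; exact absurd (Finset.mem_univ 0) h
  -- finish
  have hgoal : (∑ l : Fin n → ZMod p,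
      Complex.exp (2 * Real.pi * Complex.I / p) ^
        (dotProduct l (S.mulVec l) + dotProduct m l).val) = z := by
    rw [hzdef]
    exact Finset.sum_congr rfl fun l _ => (hψ_apply (Q l)).symm
  rw [hgoal]
  have hnsq : Complex.normSq z = (p : ℝ) ^ n := by
    have := hzz
    rw [Complex.mul_conj] at this
    exact_mod_cast this
  rw [Complex.norm_def, hnsq]
end

section
/- For an invertible symmetric n×n matrix S over Z_2, the absolute value of ∑_{l ∈ Z_2^n} i^(lᵀ S l) · (−1)^(mᵀ l) equals √(2^n) for any m ∈ Z_2^n, where lᵀ S l is computed with the entries of l and S lifted to integers. -/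
namespace WeilAux

lemma val_add_int (x y : ZMod 2) :
    (((x + y).val : ℤ)) = (x.val : ℤ) + (y.val : ℤ) - 2 * ((x.val : ℤ) * (y.val : ℤ)) := by
  fin_cases x <;> fin_cases y <;> rfl

lemma val_mul_int (x y : ZMod 2) :
    (((x * y).val : ℤ)) = (x.val : ℤ) * (y.val : ℤ) := by
  fin_cases x <;> fin_cases y <;> rfl

lemma val_cast_self (x : ZMod 2) : ((x.val : ZMod 2)) = x := by
  rw [ZMod.natCast_val, ZMod.cast_id]

lemma neg_one_pow_mod (a : ℕ) : ((-1 : ℂ)) ^ a = (-1) ^ (a % 2) := by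
  conv_lhs => rw [← Nat.div_add_mod a 2]
  rw [pow_add, pow_mul, neg_one_sq, one_pow, one_mul]

lemma neg_one_pow_congr {a b : ℕ} (h : (a : ZMod 2) = (b : ZMod 2)) :
    ((-1 : ℂ)) ^ a = (-1) ^ b := by
  rw [neg_one_pow_mod a, neg_one_pow_mod b,
    (ZMod.natCast_eq_natCast_iff' _ _ _).mp h]

variable {n : ℕ} (S : Matrix (Fin n) (Fin n) (ZMod 2))

def q (l : Fin n → ZMod 2) : ℕ := ∑ i, ∑ j, (l i).val * (S i j).val * (l j).val

def B (l d : Fin n → ZMod 2) : ℕ := ∑ i, ∑ j, (l i).val * (S i j).val * (d j).val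

def M (m l : Fin n → ZMod 2) : ℕ := ∑ i, (m i).val * (l i).val

lemma B_symm (hS : S.IsSymm) (l d : Fin n → ZMod 2) : B S l d = B S d l := by
  unfold B
  rw [Finset.sum_comm]
  refine Finset.sum_congr rfl fun i _ => Finset.sum_congr rfl fun j _ => ?_
  rw [hS.apply i j]
  ring

lemma q_add_int (l d : Fin n → ZMod 2) :
    (q S (l + d) : ℤ) =
      (q S l : ℤ) + (q S d : ℤ) + (B S l d : ℤ) + (B S d l : ℤ)
        - 2 * ((B S l (l * d) : ℤ) + (B S (l * d) l : ℤ)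
            + (B S d (l * d) : ℤ) + (B S (l * d) d : ℤ))
        + 4 * (B S (l * d) (l * d) : ℤ) := by
  unfold q B
  push_cast
  simp only [Finset.mul_sum, ← Finset.sum_add_distrib, ← Finset.sum_sub_distrib]
  refine Finset.sum_congr rfl fun i _ => Finset.sum_congr rfl fun j _ => ?_
  simp only [Pi.add_apply, Pi.mul_apply]
  simp only [val_add_int, val_mul_int]
  ring

lemma q_add_nat (hS : S.IsSymm) (l d : Fin n → ZMod 2) :
    q S (l + d) + 4 * (B S (l * d) l + B S (l * d) d)
      = q S l + q S d + 2 * B S l d + 4 * B S (l * d) (l * d) := by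
  have h := q_add_int S l d
  rw [B_symm S hS d l, B_symm S hS l (l * d), B_symm S hS d (l * d)] at h
  have h2 : (q S (l + d) : ℤ) + 4 * ((B S (l * d) l : ℤ) + (B S (l * d) d : ℤ))
      = (q S l : ℤ) + q S d + 2 * B S l d + 4 * B S (l * d) (l * d) := by
    linarith [h]
  exact_mod_cast h2

lemma I_q_add (hS : S.IsSymm) (l d : Fin n → ZMod 2) :
    Complex.I ^ (q S (l + d))
      = Complex.I ^ (q S l) * Complex.I ^ (q S d) * (-1 : ℂ) ^ (B S l d) := by
  have h := q_add_nat S hS l d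
  have e1 : Complex.I ^ (q S (l + d) + 4 * (B S (l * d) l + B S (l * d) d))
      = Complex.I ^ (q S (l + d)) := by
    rw [pow_add, pow_mul, Complex.I_pow_four, one_pow, mul_one]
  have e2 : Complex.I ^ (q S l + q S d + 2 * B S l d + 4 * B S (l * d) (l * d))
      = Complex.I ^ (q S l) * Complex.I ^ (q S d) * (-1 : ℂ) ^ (B S l d) := by
    rw [pow_add, pow_add, pow_add, pow_mul, pow_mul, Complex.I_pow_four, one_pow,
      mul_one, Complex.I_sq]
  rw [← e1, h, e2]

lemma neg_one_M_add (m l d : Fin n → ZMod 2) :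
    ((-1 : ℂ)) ^ (M m (l + d)) = (-1) ^ (M m l) * (-1) ^ (M m d) := by
  rw [← pow_add]
  apply neg_one_pow_congr
  unfold M
  push_cast [val_cast_self]
  simp [Pi.add_apply, mul_add, Finset.sum_add_distrib]

lemma B_cast (l d : Fin n → ZMod 2) :
    ((B S l d : ZMod 2)) = ∑ i, l i * (S.mulVec d) i := by
  unfold B
  push_cast [val_cast_self]
  refine Finset.sum_congr rfl fun i _ => ?_
  simp [Matrix.mulVec, dotProduct, Finset.mul_sum, mul_assoc]

lemma zmod2_cases (x : ZMod 2) : x = 0 ∨ x = 1 := by revert x; decide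

lemma orth (v : Fin n → ZMod 2) :
    (∑ l : Fin n → ZMod 2, ((-1 : ℂ)) ^ (∑ i, (l i).val * (v i).val))
      = if v = 0 then (2 : ℂ) ^ n else 0 := by
  classical
  have h1 : ∀ l : Fin n → ZMod 2, ((-1 : ℂ)) ^ (∑ i, (l i).val * (v i).val)
      = ∏ i, ((-1 : ℂ)) ^ ((l i).val * (v i).val) := fun l =>
    (Finset.prod_pow_eq_pow_sum _ _ _).symm
  simp only [h1]
  rw [show (∑ x : Fin n → ZMod 2, ∏ i, ((-1 : ℂ)) ^ ((x i).val * (v i).val))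
      = ∏ i, ∑ x : ZMod 2, ((-1 : ℂ)) ^ (x.val * (v i).val) from
    (Fintype.prod_sum (κ := fun _ : Fin n => ZMod 2)
      (fun i x => ((-1 : ℂ)) ^ (x.val * (v i).val))).symm]
  have h2 : ∀ i, (∑ x : ZMod 2, ((-1 : ℂ)) ^ (x.val * (v i).val))
      = if v i = 0 then 2 else 0 := by
    intro i
    have huniv : (Finset.univ : Finset (ZMod 2)) = {0, 1} := by decide
    rw [huniv, Finset.sum_insert (by decide), Finset.sum_singleton]
    have h0 : (0 : ZMod 2).val = 0 := rfl
    have h1' : (1 : ZMod 2).val = 1 := rfl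
    rw [h0, h1', zero_mul, one_mul, pow_zero]
    rcases zmod2_cases (v i) with hv | hv
    · rw [hv, if_pos rfl, h0, pow_zero]; norm_num
    · rw [hv, if_neg (by decide), h1', pow_one]; ring
  simp only [h2]
  by_cases hv : v = 0
  · rw [if_pos hv]
    subst hv
    simp [Finset.prod_const, Finset.card_univ]
  · rw [if_neg hv]
    obtain ⟨i, hi⟩ : ∃ i, v i ≠ 0 := by
      by_contra h; push_neg at h; exact hv (funext h)
    exact Finset.prod_eq_zero (Finset.mem_univ i) (by simp [hi])

end WeilAux

open WeilAux
theorem weil_sum_abs_two (n : ℕ)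
    (S : Matrix (Fin n) (Fin n) (ZMod 2)) (hS : S.IsSymm) (hdet : S.det ≠ 0)
    (m : Fin n → ZMod 2) :
    ‖(∑ l : Fin n → ZMod 2,
        Complex.I ^ (∑ i : Fin n, ∑ j : Fin n, (l i).val * (S i j).val * (l j).val)
          * (-1 : ℂ) ^ (∑ i : Fin n, (m i).val * (l i).val))‖
      = Real.sqrt (2 ^ n) := by
  classical
  show ‖(∑ l : Fin n → ZMod 2,
      Complex.I ^ (q S l) * (-1 : ℂ) ^ (M m l))‖ = Real.sqrt (2 ^ n)
  set W : ℂ := ∑ l : Fin n → ZMod 2, Complex.I ^ (q S l) * (-1 : ℂ) ^ (M m l)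
    with hWdef
  have hinj : Function.Injective S.mulVec :=
    Matrix.mulVec_injective_iff_isUnit.mpr
      ((Matrix.isUnit_iff_isUnit_det S).mpr (isUnit_iff_ne_zero.mpr hdet))
  have hker : ∀ d : Fin n → ZMod 2, S.mulVec d = 0 ↔ d = 0 := fun d =>
    ⟨fun h => hinj (h.trans (Matrix.mulVec_zero S).symm), fun h => by
      subst h; exact Matrix.mulVec_zero S⟩
  have horth : ∀ d : Fin n → ZMod 2,
      (∑ l : Fin n → ZMod 2, ((-1 : ℂ)) ^ (B S l d))
        = if d = 0 then (2 : ℂ) ^ n else 0 := by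
    intro d
    have hB : ∀ l : Fin n → ZMod 2, ((-1 : ℂ)) ^ (B S l d)
        = (-1 : ℂ) ^ (∑ i, (l i).val * ((S.mulVec d) i).val) := by
      intro l
      apply WeilAux.neg_one_pow_congr
      rw [B_cast]
      push_cast [val_cast_self]
      rfl
    simp only [hB]
    rw [orth, if_congr (hker d) rfl rfl]
  have hconj : (starRingEnd ℂ) W
      = ∑ l : Fin n → ZMod 2, (-Complex.I) ^ (q S l) * (-1 : ℂ) ^ (M m l) := by
    rw [hWdef, map_sum]
    refine Finset.sum_congr rfl fun l _ => ?_
    rw [map_mul, map_pow, map_pow, Complex.conj_I, map_neg, map_one]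
  have hmain : (starRingEnd ℂ) W * W = (2 : ℂ) ^ n := by
    rw [hconj, hWdef, Finset.sum_mul_sum]
    have step : ∀ l' : Fin n → ZMod 2,
        (∑ l : Fin n → ZMod 2,
          ((-Complex.I) ^ (q S l') * (-1 : ℂ) ^ (M m l'))
            * (Complex.I ^ (q S l) * (-1 : ℂ) ^ (M m l)))
        = ∑ d : Fin n → ZMod 2,
            Complex.I ^ (q S d) * (-1 : ℂ) ^ (M m d) * (-1 : ℂ) ^ (B S l' d) := by
      intro l'
      rw [← Equiv.sum_comp (Equiv.addLeft l')
        (fun l => ((-Complex.I) ^ (q S l') * (-1 : ℂ) ^ (M m l'))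
          * (Complex.I ^ (q S l) * (-1 : ℂ) ^ (M m l)))]
      refine Finset.sum_congr rfl fun d _ => ?_
      simp only [Equiv.coe_addLeft]
      rw [I_q_add S hS, neg_one_M_add]
      have h1 : (-Complex.I) ^ (q S l') * Complex.I ^ (q S l') = 1 := by
        rw [← mul_pow, neg_mul, Complex.I_mul_I, neg_neg, one_pow]
      have h2 : ((-1 : ℂ)) ^ (M m l') * (-1 : ℂ) ^ (M m l') = 1 := by
        rw [← mul_pow]; norm_num
      linear_combination
        (Complex.I ^ (q S d) * (-1 : ℂ) ^ (M m d) * (-1 : ℂ) ^ (B S l' d)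
          * ((-1 : ℂ) ^ (M m l') * (-1 : ℂ) ^ (M m l'))) * h1
        + (Complex.I ^ (q S d) * (-1 : ℂ) ^ (M m d) * (-1 : ℂ) ^ (B S l' d)) * h2
    simp only [step]
    rw [Finset.sum_comm]
    have inner : ∀ d : Fin n → ZMod 2,
        (∑ l' : Fin n → ZMod 2,
          Complex.I ^ (q S d) * (-1 : ℂ) ^ (M m d) * (-1 : ℂ) ^ (B S l' d))
        = if d = 0 then (2 : ℂ) ^ n else 0 := by
      intro d
      rw [← Finset.mul_sum, horth d]
      by_cases hd : d = 0
      · subst hd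
        have hq0 : q S 0 = 0 := by simp [q]
        have hM0 : M m 0 = 0 := by simp [M]
        simp [hq0, hM0]
      · simp [hd]
    simp only [inner]
    simp
  have hnormSq : Complex.normSq W = (2 : ℝ) ^ n := by
    have h2 : ((Complex.normSq W : ℝ) : ℂ) = ((2 : ℝ) ^ n : ℂ) := by
      rw [← Complex.mul_conj, mul_comm, hmain]
      push_cast
      ring
    exact_mod_cast h2
  have habs : ‖W‖ ^ 2 = (2 : ℝ) ^ n := by
    rw [Complex.sq_norm, hnormSq]
  rw [← habs, Real.sqrt_sq (norm_nonneg W)]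
end

section
/- For prime p, the p+1 bases of C^p given by the computational basis together with the bases B_k = { p^{-1/2} ∑_{l=0}^{p-1} ω^(k·l² + m·l) |l⟩ : m ∈ Z_p } for k ∈ Z_p (with 2^{-1} absorbed appropriately for p odd) form a complete set of p+1 mutually unbiased bases. -/
/-- The vector `|v_k(m)⟩ = p^{-1/2} ∑_l ω^{k l² + m l} |l⟩` in `ℂ^p`,
where `ω = exp(2πi/p)`. -/
noncomputable def mubVec (p : ℕ) [NeZero p] (k m : ZMod p) :
    EuclideanSpace ℂ (Fin p) :=
  WithLp.toLp 2 fun (l : Fin p) => (1 / Real.sqrt p : ℝ) *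
    Complex.exp (2 * Real.pi * Complex.I / p) ^
      (k * ((l : ℕ) : ZMod p) ^ 2 + m * ((l : ℕ) : ZMod p)).val

namespace MUBAux

variable (p : ℕ) [hp : Fact p.Prime]

noncomputable def e (c : ZMod p) : ℂ := Complex.exp (2 * Real.pi * Complex.I / p) ^ c.val

variable {p}

lemma hpow : Complex.exp (2 * Real.pi * Complex.I / p) ^ p = 1 :=
  (Complex.isPrimitiveRoot_exp p (NeZero.ne p)).pow_eq_one

lemma e_add (a b : ZMod p) : e p (a + b) = e p a * e p b := by
  unfold e
  rw [ZMod.val_add, ← pow_eq_pow_mod _ hpow, pow_add]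

lemma e_zero : e p (0 : ZMod p) = 1 := by simp [e]

lemma norm_e (a : ZMod p) : ‖e p a‖ = 1 := by
  unfold e
  rw [norm_pow,
    show (2 * Real.pi * Complex.I / p : ℂ) = (↑(2 * Real.pi / p) : ℝ) * Complex.I by
      push_cast; ring, Complex.norm_exp_ofReal_mul_I, one_pow]

lemma conj_e (a : ZMod p) : (starRingEnd ℂ) (e p a) = e p (-a) := by
  have h1 : e p a * e p (-a) = 1 := by rw [← e_add]; simp [e_zero]
  have h2 : (e p a)⁻¹ = (starRingEnd ℂ) (e p a) := Complex.inv_eq_conj (norm_e a)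
  rw [← h2]
  exact (eq_inv_of_mul_eq_one_left (by rw [mul_comm] at h1; exact h1)).symm

lemma sum_e_univ : ∑ x : ZMod p, e p x = 0 := by
  have h : ∑ x : ZMod p, e p x
      = ∑ i ∈ Finset.range p, Complex.exp (2 * Real.pi * Complex.I / p) ^ i := by
    refine Finset.sum_nbij' (i := ZMod.val) (j := (Nat.cast : ℕ → ZMod p)) ?_ ?_ ?_ ?_ ?_ <;>
      simp [ZMod.val_lt, ZMod.natCast_val, ZMod.val_natCast_of_lt, Finset.mem_range, e]
    intro a ha; exact Nat.mod_eq_of_lt ha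
  rw [h]
  exact (Complex.isPrimitiveRoot_exp p (NeZero.ne p)).geom_sum_eq_zero hp.out.one_lt

lemma sum_e (t : ZMod p) : ∑ x : ZMod p, e p (t * x) = if t = 0 then (p : ℂ) else 0 := by
  split_ifs with h
  · subst h; simp [e_zero, ZMod.card]
  · rw [Fintype.sum_bijective _ (mulLeft_bijective₀ t h) (fun x => e p (t * x)) (e p)
      (fun x => rfl), sum_e_univ]

/-- the main Gauss-sum-squared computation -/
lemma conj_sum_mul (a b : ZMod p) (ha : a ≠ 0) (h2 : (2 : ZMod p) ≠ 0) :
    (starRingEnd ℂ) (∑ x : ZMod p, e p (a * x ^ 2 + b * x)) *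
      (∑ x : ZMod p, e p (a * x ^ 2 + b * x)) = p := by
  rw [map_sum, Finset.sum_mul_sum]
  simp only [conj_e]
  have key : ∀ y : ZMod p, ∑ x : ZMod p, e p (-(a * y ^ 2 + b * y)) * e p (a * x ^ 2 + b * x)
      = ∑ d : ZMod p, e p ((2 * a * y) * d) * e p (a * d ^ 2 + b * d) := by
    intro y
    rw [← Equiv.sum_comp (Equiv.addLeft y) (fun x => e p (-(a * y ^ 2 + b * y)) * e p (a * x ^ 2 + b * x))]
    refine Finset.sum_congr rfl fun d _ => ?_
    simp only [Equiv.coe_addLeft]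
    rw [← e_add, ← e_add]
    congr 1
    ring
  calc ∑ y : ZMod p, ∑ x : ZMod p, e p (-(a * y ^ 2 + b * y)) * e p (a * x ^ 2 + b * x)
      = ∑ y : ZMod p, ∑ d : ZMod p, e p ((2 * a * y) * d) * e p (a * d ^ 2 + b * d) := by
        exact Finset.sum_congr rfl fun y _ => key y
    _ = ∑ d : ZMod p, ∑ y : ZMod p, e p ((2 * a * d) * y) * e p (a * d ^ 2 + b * d) := by
        rw [Finset.sum_comm]
        refine Finset.sum_congr rfl fun d _ => Finset.sum_congr rfl fun y _ => ?_
        congr 2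
        ring
    _ = ∑ d : ZMod p, (if 2 * a * d = 0 then (p : ℂ) else 0) * e p (a * d ^ 2 + b * d) := by
        refine Finset.sum_congr rfl fun d _ => ?_
        rw [← Finset.sum_mul, sum_e]
    _ = (p : ℂ) := by
        rw [Finset.sum_eq_single 0]
        · simp [e_zero]
        · intro d _ hd
          rw [if_neg (by
            intro hc
            exact hd (by
              rcases mul_eq_zero.1 hc with hc' | hc'
              · exact absurd (mul_eq_zero.1 hc') (by rintro (h | h) <;> [exact h2 h; exact ha h])
              · exact hc')), zero_mul]
        · intro h; exact absurd (Finset.mem_univ 0) h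

end MUBAux

open MUBAux in
theorem inner_mub (p : ℕ) [hp : Fact p.Prime] (k m k' m' : ZMod p) :
    (inner ℂ (mubVec p k m) (mubVec p k' m') : ℂ)
      = (p : ℂ)⁻¹ * ∑ x : ZMod p, e p ((k' - k) * x ^ 2 + (m' - m) * x) := by
  have hbij : Function.Bijective (fun l : Fin p => ((l : ℕ) : ZMod p)) := by
    constructor
    · intro l l' h
      have := congrArg ZMod.val h
      rwa [ZMod.val_natCast_of_lt l.isLt, ZMod.val_natCast_of_lt l'.isLt, Fin.val_inj] at this
    · intro x
      exact ⟨⟨x.val, x.val_lt⟩, ZMod.natCast_rightInverse x⟩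
  have hsq : ((1 / Real.sqrt p : ℝ) : ℂ) * ((1 / Real.sqrt p : ℝ) : ℂ) = (p : ℂ)⁻¹ := by
    rw [← Complex.ofReal_mul]
    rw [show (1 / Real.sqrt p) * (1 / Real.sqrt p) = 1 / p by
      rw [div_mul_div_comm, one_mul, Real.mul_self_sqrt (Nat.cast_nonneg p)]]
    push_cast
    rw [one_div]
  rw [PiLp.inner_apply]
  have hterm : ∀ l : Fin p, (inner ℂ (mubVec p k m l) (mubVec p k' m' l) : ℂ)
      = (p : ℂ)⁻¹ * e p ((k' - k) * ((l : ℕ) : ZMod p) ^ 2 + (m' - m) * ((l : ℕ) : ZMod p)) := by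
    intro l
    show (mubVec p k' m' l) * (starRingEnd ℂ) (mubVec p k m l) = _
    rw [mul_comm]
    show (starRingEnd ℂ) (((1 / Real.sqrt p : ℝ) : ℂ) * e p (k * ((l : ℕ) : ZMod p) ^ 2 + m * ((l : ℕ) : ZMod p)))
        * (((1 / Real.sqrt p : ℝ) : ℂ) * e p (k' * ((l : ℕ) : ZMod p) ^ 2 + m' * ((l : ℕ) : ZMod p))) = _
    rw [map_mul, Complex.conj_ofReal, conj_e]
    rw [show ∀ (z w u v : ℂ), (z * w) * (u * v) = (z * u) * (w * v) by intros; ring]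
    rw [hsq, ← e_add]
    congr 2
    ring
  simp_rw [hterm]
  rw [← Finset.mul_sum]
  congr 1
  exact Fintype.sum_bijective _ hbij _ _ (fun l => rfl)

open MUBAux in
theorem odd_prime_complete_mubs (p : ℕ) [hp : Fact p.Prime] (hp3 : 3 ≤ p) :
    -- each B_k is an orthonormal basis of ℂ^p
    (∀ k : ZMod p, Orthonormal ℂ (mubVec p k) ∧
        ⊤ ≤ Submodule.span ℂ (Set.range (mubVec p k))) ∧
    -- the bases B_k and B_k' are mutually unbiased for k ≠ k'
    (∀ k k' : ZMod p, k ≠ k' → ∀ m m' : ZMod p,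
        ‖(inner ℂ (mubVec p k m) (mubVec p k' m') : ℂ)‖ ^ 2 = 1 / p) ∧
    -- each B_k is mutually unbiased with the computational basis
    (∀ (k m : ZMod p) (l : Fin p),
        ‖(inner ℂ (EuclideanSpace.single l (1 : ℂ)) (mubVec p k m) : ℂ)‖ ^ 2 = 1 / p) := by
  have hp0 : (p : ℝ) ≠ 0 := Nat.cast_ne_zero.mpr hp.out.ne_zero
  have h2 : (2 : ZMod p) ≠ 0 := by
    intro h
    have h' : ((2 : ℕ) : ZMod p) = 0 := by exact_mod_cast h
    have := (ZMod.natCast_eq_zero_iff 2 p).mp h'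
    have := Nat.le_of_dvd (by norm_num) this
    omega
  refine ⟨?_, ?_, ?_⟩
  · intro k
    have horth : Orthonormal ℂ (mubVec p k) := by
      rw [orthonormal_iff_ite]
      intro m m'
      rw [inner_mub, sub_self]
      have hx : ∀ x : ZMod p, (0 : ZMod p) * x ^ 2 + (m' - m) * x = (m' - m) * x := by
        intro x; ring
      simp_rw [hx]
      rw [MUBAux.sum_e]
      by_cases h : m = m'
      · subst h
        rw [if_pos (sub_self m), if_pos rfl]
        field_simp
        exact div_self (Nat.cast_ne_zero.mpr hp.out.ne_zero)
      · rw [if_neg (sub_ne_zero.mpr (Ne.symm h)), if_neg h, mul_zero]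
    refine ⟨horth, le_of_eq ?_⟩
    exact (horth.linearIndependent.span_eq_top_of_card_eq_finrank
      (by simp [ZMod.card, finrank_euclideanSpace_fin])).symm
  · intro k k' hkk m m'
    rw [inner_mub]
    have ha : k' - k ≠ 0 := sub_ne_zero.mpr (Ne.symm hkk)
    set S := ∑ x : ZMod p, MUBAux.e p ((k' - k) * x ^ 2 + (m' - m) * x) with hSdef
    have hS := MUBAux.conj_sum_mul (k' - k) (m' - m) ha h2
    rw [← hSdef, mul_comm, Complex.mul_conj] at hS
    have hnormS : ‖S‖ ^ 2 = p := by
      rw [Complex.sq_norm]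
      exact_mod_cast hS
    rw [norm_mul, mul_pow, hnormS, norm_inv, Complex.norm_natCast]
    field_simp
  · intro k m l
    rw [EuclideanSpace.inner_single_left]
    have : mubVec p k m l = ((1 / Real.sqrt p : ℝ) : ℂ) *
        MUBAux.e p (k * ((l : ℕ) : ZMod p) ^ 2 + m * ((l : ℕ) : ZMod p)) := rfl
    rw [map_one, one_mul, this, norm_mul, MUBAux.norm_e, mul_one, Complex.norm_real,
      Real.norm_eq_abs, _root_.abs_of_nonneg (by positivity), div_pow, one_pow,
      Real.sq_sqrt (Nat.cast_nonneg p)]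
end
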